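/- Let θ ∈ ℝ be a quadratic irrationality, i.e., θ is irrational and there exist integers A, B, C with A ≠ 0 and Aθ² + Bθ + C = 0. Then there exists a matrix g = [[a,b],[c,d]] ∈ SL₂(ℤ) with g ≠ I, g ≠ −I and (aθ + b)/(cθ + d) = θ. -/

import Mathlib

/-- If `θ` is a quadratic irrationality then there exists a matrix
`g ∈ SL₂(ℤ)`, `g ≠ ±I`, fixing `θ` under the action by fractional linear
transformations. -/
theorem exists_sl2_fixing_quadratic_irrational
    (θ : ℝ) (hθ : Irrational θ)
    (A B C : ℤ) (hA : A ≠ 0)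
    (hquad : (A : ℝ) * θ ^ 2 + (B : ℝ) * θ + (C : ℝ) = 0) :
    ∃ g : Matrix.SpecialLinearGroup (Fin 2) ℤ, g ≠ 1 ∧ g ≠ -1 ∧
      ((g.1 0 0 : ℝ) * θ + (g.1 0 1 : ℝ)) / ((g.1 1 0 : ℝ) * θ + (g.1 1 1 : ℝ)) = θ := by
  have hA' : (A : ℝ) ≠ 0 := Int.cast_ne_zero.mpr hA
  have hrat : ∀ p q : ℤ, (q : ℝ) ≠ 0 → θ ≠ (p : ℝ) / (q : ℝ) := by
    intro p q hq h
    exact hθ ⟨(p : ℚ) / q, by push_cast; rw [← h]⟩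
  set D : ℤ := B ^ 2 - 4 * A * C with hDdef
  have key : ((D : ℝ)) = (2 * A * θ + B) ^ 2 := by
    rw [hDdef]
    push_cast
    linear_combination (-4 * (A : ℝ)) * hquad
  have h2AθB : (2 * (A : ℝ) * θ + B) ≠ 0 := by
    intro h
    apply hrat (-B) (2 * A) (by push_cast; simp [hA'])
    field_simp
    push_cast
    linarith
  have hDpos : 0 < D := by
    have : (0 : ℝ) < (D : ℝ) := by
      rw [key]; positivity
    exact_mod_cast this
  have hDns : ¬ IsSquare D := by
    rintro ⟨m, hm⟩
    have hm' : ((m : ℝ)) ^ 2 = (2 * A * θ + B) ^ 2 := by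
      rw [← key, hm]; push_cast; ring
    rcases sq_eq_sq_iff_eq_or_eq_neg.mp hm' with h | h
    · exact hrat (m - B) (2 * A) (by push_cast; simp [hA'])
        (by field_simp; push_cast; linarith)
    · exact hrat (-m - B) (2 * A) (by push_cast; simp [hA'])
        (by field_simp; push_cast; linarith)
  obtain ⟨x, y, hpell, hy⟩ := Pell.exists_of_not_isSquare hDpos hDns
  have hdet : (!![x - B * y, -2 * C * y; 2 * A * y, x + B * y] :
      Matrix (Fin 2) (Fin 2) ℤ).det = 1 := by
    rw [Matrix.det_fin_two_of]
    linear_combination hpell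
  refine ⟨⟨!![x - B * y, -2 * C * y; 2 * A * y, x + B * y], hdet⟩, ?_, ?_, ?_⟩
  · intro h
    have h10 := congrArg (fun g : Matrix.SpecialLinearGroup (Fin 2) ℤ => g.1 1 0) h
    simp at h10
    rcases h10 with h' | h'
    · exact hA h'
    · exact hy h'
  · intro h
    have h10 := congrArg (fun g : Matrix.SpecialLinearGroup (Fin 2) ℤ => g.1 1 0) h
    simp at h10
    rcases h10 with h' | h'
    · exact hA h'
    · exact hy h'
  · have hy' : (y : ℝ) ≠ 0 := Int.cast_ne_zero.mpr hy
    have hden : (((2 * A * y : ℤ)) : ℝ) * θ + ((x + B * y : ℤ) : ℝ) ≠ 0 := by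
      intro h
      apply hrat (-(x + B * y)) (2 * A * y) (by push_cast; simp [hA', hy'])
      push_cast at h ⊢
      field_simp
      linarith
    show (((x - B * y : ℤ) : ℝ) * θ + ((-2 * C * y : ℤ) : ℝ)) /
        (((2 * A * y : ℤ) : ℝ) * θ + ((x + B * y : ℤ) : ℝ)) = θ
    rw [div_eq_iff hden]
    push_cast
    linear_combination (-2 * (y : ℝ)) * hquad
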